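/- arXiv:2410.03178 — 2 statements merged into one kernel-verified Lean document; each statement's English description precedes it below -/
import Mathlib

section
/- Let A be an n×n real matrix, B an n×m real matrix, Q an n×n positive semidefinite matrix, and R an m×m positive definite matrix. If the block matrix [Q; A] (stacked vertically) has full column rank n and [A B] (stacked horizontally) has full row rank n, then for any vector c ∈ ℝⁿ the optimization problem min_{y,u} (1/2)(yᵀQy + uᵀRu) subject to Ay + Bu + c = 0 has at most one optimal solution: if (x̄,ū) and (x̂,û) are both minimizers, then x̄ = x̂ and ū = û. -/
open Matrix

lemma fullrank_mulVec_eq_zero {k : Type*} [Fintype k] {n : ℕ} (M : Matrix k (Fin n) ℝ)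
    (hM : M.rank = n) {v : Fin n → ℝ} (hv : M.mulVec v = 0) : v = 0 := by
  have h := LinearMap.finrank_range_add_finrank_ker M.mulVecLin
  rw [Module.finrank_fintype_fun_eq_card, Fintype.card_fin] at h
  have hrank : Module.finrank ℝ (LinearMap.range M.mulVecLin) = n := hM
  have hker : Module.finrank ℝ (LinearMap.ker M.mulVecLin) = 0 := by omega
  have : LinearMap.ker M.mulVecLin = ⊥ := Submodule.finrank_eq_zero.mp hker
  have hv' : v ∈ LinearMap.ker M.mulVecLin := by
    simp [LinearMap.mem_ker, mulVecLin_apply, hv]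
  rw [this, Submodule.mem_bot] at hv'
  exact hv'

/-- Uniqueness of the optimal solution of the steady-state optimization problem
`min (1/2)(yᵀQy + uᵀRu)` s.t. `Ay + Bu + c = 0`. -/
theorem stmt_0 {n m : ℕ}
    (A : Matrix (Fin n) (Fin n) ℝ) (B : Matrix (Fin n) (Fin m) ℝ)
    (Q : Matrix (Fin n) (Fin n) ℝ) (R : Matrix (Fin m) (Fin m) ℝ)
    (hQ : Q.PosSemidef) (hR : R.PosDef)
    (hrankQA : (Matrix.fromRows Q A).rank = n)
    (hrankAB : (Matrix.fromCols A B).rank = n)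
    (c : Fin n → ℝ)
    (f : (Fin n → ℝ) → (Fin m → ℝ) → ℝ)
    (hf : ∀ y u, f y u = (1/2) * (y ⬝ᵥ Q.mulVec y + u ⬝ᵥ R.mulVec u))
    (xbar xhat : Fin n → ℝ) (ubar uhat : Fin m → ℝ)
    (hfeas1 : A.mulVec xbar + B.mulVec ubar + c = 0)
    (hfeas2 : A.mulVec xhat + B.mulVec uhat + c = 0)
    (hopt1 : ∀ y u, A.mulVec y + B.mulVec u + c = 0 → f xbar ubar ≤ f y u)
    (hopt2 : ∀ y u, A.mulVec y + B.mulVec u + c = 0 → f xhat uhat ≤ f y u) :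
    xbar = xhat ∧ ubar = uhat := by
  set d : Fin n → ℝ := xbar - xhat with hd
  set e : Fin m → ℝ := ubar - uhat with he
  -- midpoint is feasible
  have hmidfeas : A.mulVec ((1/2 : ℝ) • (xbar + xhat)) +
      B.mulVec ((1/2 : ℝ) • (ubar + uhat)) + c = 0 := by
    simp only [mulVec_smul, mulVec_add]
    have h02 : (1/2 : ℝ) • (A *ᵥ xbar + B *ᵥ ubar + c) = 0 := by rw [hfeas1]; simp
    have h03 : (1/2 : ℝ) • (A *ᵥ xhat + B *ᵥ uhat + c) = 0 := by rw [hfeas2]; simp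
    linear_combination (norm := module) h02 + h03
  have h1 : f xbar ubar ≤ f xhat uhat := hopt1 _ _ hfeas2
  have h2 : f xhat uhat ≤ f xbar ubar := hopt2 _ _ hfeas1
  have h3 : f xbar ubar ≤ f ((1/2 : ℝ) • (xbar + xhat)) ((1/2 : ℝ) • (ubar + uhat)) :=
    hopt1 _ _ hmidfeas
  -- key inequality
  have key : d ⬝ᵥ Q.mulVec d + e ⬝ᵥ R.mulVec e ≤ 0 := by
    simp only [hf] at h1 h2 h3
    simp only [hd, he, mulVec_smul, mulVec_add, mulVec_sub, dotProduct_smul,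
      smul_dotProduct, dotProduct_add, add_dotProduct, dotProduct_sub, sub_dotProduct,
      smul_eq_mul] at h1 h2 h3 ⊢
    linarith
  have hQd : 0 ≤ d ⬝ᵥ Q.mulVec d := hQ.dotProduct_mulVec_nonneg d
  have hRe : 0 ≤ e ⬝ᵥ R.mulVec e := hR.posSemidef.dotProduct_mulVec_nonneg e
  have hRe0 : e ⬝ᵥ R.mulVec e = 0 := by linarith
  have he0 : e = 0 := by
    by_contra h
    have := hR.dotProduct_mulVec_pos h
    rw [star_trivial] at this
    linarith
  have hu : ubar = uhat := by rwa [he, sub_eq_zero] at he0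
  have hQd0 : d ⬝ᵥ Q.mulVec d = 0 := by linarith
  have hQdz : Q.mulVec d = 0 := by
    have := (hQ.dotProduct_mulVec_zero_iff d).mp
    rw [star_trivial] at this
    exact this hQd0
  have hAdz : A.mulVec d = 0 := by
    have := congrArg₂ (· - ·) hfeas1 hfeas2
    simp only [hu, sub_zero] at this
    have h' : A *ᵥ xbar - A *ᵥ xhat = 0 := by
      have := this
      abel_nf at this ⊢
      linear_combination (norm := abel) this
    rw [hd, mulVec_sub]
    exact h'
  have hdz : d = 0 := by
    apply fullrank_mulVec_eq_zero (Matrix.fromRows Q A)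
    · -- rank over Fin (n+n)? fromRows has index type Sum; adapt
      exact hrankQA
    · rw [fromRows_mulVec, hQdz, hAdz]
      simp
  have hx : xbar = xhat := by rwa [hd, sub_eq_zero] at hdz
  exact ⟨hx, hu⟩
end

section
/- Let Q ∈ ℝ^{n×n} be symmetric positive definite, R ∈ ℝ^{m×m} symmetric positive definite, A ∈ ℝ^{n×n}, B ∈ ℝ^{n×m} such that [Aᵀ; Bᵀ] has full column rank, and let K^y, K^λ ∈ ℝ^{n×n} be symmetric positive definite. Then the matrix S = [[−K^yQ, −K^yAᵀ], [K^λA, −K^λBR⁻¹Bᵀ]] is Hurwitz. -/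
open Matrix Complex

namespace Stmt9Aux

set_option linter.unusedSectionVars false

variable {k l : Type*} [Fintype k] [Fintype l]

lemma star_real (a : k → ℝ) : star a = a := funext fun _ => rfl

lemma ofReal_dot (M : Matrix k l ℝ) (a : k → ℝ) (b : l → ℝ) :
    (fun i => ((a i : ℝ) : ℂ)) ⬝ᵥ (M.map Complex.ofReal) *ᵥ (fun j => ((b j : ℝ) : ℂ))
      = ((a ⬝ᵥ M *ᵥ b : ℝ) : ℂ) := by
  simp only [dotProduct, mulVec, Matrix.map_apply]
  push_cast
  rfl

lemma dot_transpose (M : Matrix k l ℝ) (a : k → ℝ) (b : l → ℝ) :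
    a ⬝ᵥ M *ᵥ b = b ⬝ᵥ Mᵀ *ᵥ a := by
  rw [dotProduct_mulVec, ← mulVec_transpose, dotProduct_comm]

lemma bilin_decomp (M : Matrix k l ℝ) (x : k → ℂ) (y : l → ℂ) :
    star x ⬝ᵥ (M.map Complex.ofReal) *ᵥ y
      = (((fun i => (x i).re) ⬝ᵥ M *ᵥ (fun j => (y j).re)
          + (fun i => (x i).im) ⬝ᵥ M *ᵥ (fun j => (y j).im) : ℝ) : ℂ)
        + Complex.I * (((fun i => (x i).re) ⬝ᵥ M *ᵥ (fun j => (y j).im)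
          - (fun i => (x i).im) ⬝ᵥ M *ᵥ (fun j => (y j).re) : ℝ) : ℂ) := by
  have hx : star x = (fun i => (((x i).re : ℝ) : ℂ)) - Complex.I • (fun i => (((x i).im : ℝ) : ℂ)) := by
    funext i
    simp [Complex.ext_iff]
  have hy : y = (fun j => (((y j).re : ℝ) : ℂ)) + Complex.I • (fun j => (((y j).im : ℝ) : ℂ)) := by
    funext j
    simp [Complex.ext_iff]
  rw [hx]
  conv_lhs => rw [hy]
  simp only [mulVec_add, mulVec_smul, dotProduct_add, sub_dotProduct, smul_dotProduct,
    dotProduct_smul, smul_eq_mul, ofReal_dot]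
  apply Complex.ext <;> simp <;> ring

lemma quad_decomp (M : Matrix k k ℝ) (hM : Mᵀ = M) (x : k → ℂ) :
    star x ⬝ᵥ (M.map Complex.ofReal) *ᵥ x
      = (((fun i => (x i).re) ⬝ᵥ M *ᵥ (fun j => (x j).re)
          + (fun i => (x i).im) ⬝ᵥ M *ᵥ (fun j => (x j).im) : ℝ) : ℂ) := by
  rw [bilin_decomp, dot_transpose M (fun i => (x i).re) (fun j => (x j).im), hM]
  simp

lemma map_mul_ofReal (M : Matrix k l ℝ) (N : Matrix l k ℝ) :
    ((M * N).map Complex.ofReal) = M.map Complex.ofReal * N.map Complex.ofReal := by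
  ext i j
  simp only [Matrix.mul_apply, Matrix.map_apply]
  push_cast
  rfl

lemma map_neg_ofReal (M : Matrix k l ℝ) :
    ((-M).map Complex.ofReal) = -(M.map Complex.ofReal) := by
  ext i j
  simp [Matrix.map_apply]

lemma real_pd_quad_pos {M : Matrix k k ℝ} (hM : M.PosDef) {a : k → ℝ} (ha : a ≠ 0) :
    0 < a ⬝ᵥ M *ᵥ a := by
  have := hM.dotProduct_mulVec_pos ha
  rwa [star_real] at this

lemma real_psd_quad_nonneg {M : Matrix k k ℝ} (hM : M.PosSemidef) (a : k → ℝ) :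
    0 ≤ a ⬝ᵥ M *ᵥ a := by
  have := hM.dotProduct_mulVec_nonneg a
  rwa [star_real] at this

lemma real_pd_quad_eq_zero {M : Matrix k k ℝ} (hM : M.PosDef) {a : k → ℝ}
    (h : a ⬝ᵥ M *ᵥ a = 0) : a = 0 := by
  by_contra ha
  exact absurd h (real_pd_quad_pos hM ha).ne'

lemma real_herm_transpose {M : Matrix k k ℝ} (hM : M.IsHermitian) : Mᵀ = M := by
  ext i j
  exact congrFun (congrFun hM i) j

lemma mapVec_zero (M : Matrix k l ℝ) (x : l → ℂ) (h : M.map Complex.ofReal *ᵥ x = 0) :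
    M *ᵥ (fun j => (x j).re) = 0 ∧ M *ᵥ (fun j => (x j).im) = 0 := by
  constructor <;> funext i <;> have hi := congrFun h i <;>
    simp only [mulVec, dotProduct, Matrix.map_apply, Pi.zero_apply] at hi ⊢
  · have h1 := congrArg Complex.re hi
    simpa [Complex.re_sum] using h1
  · have h2 := congrArg Complex.im hi
    simpa [Complex.im_sum] using h2

lemma rank_inj {p q r : ℕ} (M : Matrix (Fin p ⊕ Fin q) (Fin r) ℝ) (h : M.rank = r)
    {w : Fin r → ℝ} (hw : M *ᵥ w = 0) : w = 0 := by
  have h1 : Module.finrank ℝ (LinearMap.range M.mulVecLin) = r := h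
  have h2 := LinearMap.finrank_range_add_finrank_ker M.mulVecLin
  rw [h1, Module.finrank_fin_fun] at h2
  have h3 : Module.finrank ℝ (LinearMap.ker M.mulVecLin) = 0 := by omega
  have h4 : LinearMap.ker M.mulVecLin = ⊥ := Submodule.finrank_eq_zero.mp h3
  have h5 : w ∈ LinearMap.ker M.mulVecLin := by
    rw [LinearMap.mem_ker, Matrix.mulVecLin_apply, hw]
  rw [h4] at h5
  simpa using h5

lemma posDef_fromBlocks {p : ℕ} {P D : Matrix (Fin p) (Fin p) ℝ}
    (hP : P.PosDef) (hD : D.PosDef) :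
    (Matrix.fromBlocks P 0 0 D).PosDef := by
  refine posDef_iff_dotProduct_mulVec.mpr ⟨?_, ?_⟩
  · rw [Matrix.IsHermitian, fromBlocks_conjTranspose, hP.1, hD.1]
    simp
  · intro x hx
    have hxel : x = Sum.elim (x ∘ Sum.inl) (x ∘ Sum.inr) := (Sum.elim_comp_inl_inr x).symm
    rw [hxel, fromBlocks_mulVec, Function.star_sumElim, sumElim_dotProduct_sumElim]
    simp only [Matrix.zero_mulVec, add_zero, zero_add]
    have hcase : x ∘ Sum.inl ≠ 0 ∨ x ∘ Sum.inr ≠ 0 := by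
      by_contra hc
      push_neg at hc
      apply hx
      funext i
      cases i with
      | inl i => exact congrFun hc.1 i
      | inr i => exact congrFun hc.2 i
    rcases hcase with h | h
    · exact add_pos_of_pos_of_nonneg (hP.dotProduct_mulVec_pos h) (hD.posSemidef.dotProduct_mulVec_nonneg _)
    · exact add_pos_of_nonneg_of_pos (hP.posSemidef.dotProduct_mulVec_nonneg _) (hD.dotProduct_mulVec_pos h)

end Stmt9Aux

open Stmt9Aux in
/-- The primal-dual state matrix `S = [[-K^yQ, -K^yAᵀ], [K^λA, -K^λBR⁻¹Bᵀ]]`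
is Hurwitz when `Q`, `R`, `K^y`, `K^λ` are positive definite and `[Aᵀ; Bᵀ]`
has full column rank. -/
theorem stmt_9 {n m : ℕ}
    (A : Matrix (Fin n) (Fin n) ℝ) (B : Matrix (Fin n) (Fin m) ℝ)
    (Q : Matrix (Fin n) (Fin n) ℝ) (R : Matrix (Fin m) (Fin m) ℝ)
    (hQ : Q.PosDef) (hR : R.PosDef)
    (hrank : (Matrix.fromRows Aᵀ Bᵀ).rank = n)
    (Ky Klam : Matrix (Fin n) (Fin n) ℝ)
    (hKy : Ky.PosDef) (hKlam : Klam.PosDef)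
    (S : Matrix (Fin n ⊕ Fin n) (Fin n ⊕ Fin n) ℝ)
    (hS : S = Matrix.fromBlocks (-(Ky * Q)) (-(Ky * Aᵀ))
                (Klam * A) (-(Klam * (B * R⁻¹ * Bᵀ)))) :
    ∀ z ∈ spectrum ℂ (S.map (Complex.ofReal)), z.re < 0 := by
  intro z hz
  classical
  -- extract an eigenvector
  have hz' : z ∈ spectrum ℂ (Matrix.toLinAlgEquiv' (S.map Complex.ofReal)) := by
    rwa [AlgEquiv.spectrum_eq]
  have hev : Module.End.HasEigenvalue (Matrix.toLinAlgEquiv' (S.map Complex.ofReal)) z :=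
    Module.End.hasEigenvalue_iff_mem_spectrum.mpr hz'
  obtain ⟨v, hv⟩ := hev.exists_hasEigenvector
  have hv0 : v ≠ 0 := hv.2
  have hvz : (S.map Complex.ofReal) *ᵥ v = z • v := by
    have h := hv.apply_eq_smul
    rw [show (Matrix.toLinAlgEquiv' (S.map Complex.ofReal)) v
        = (S.map Complex.ofReal) *ᵥ v from rfl] at h
    exact h
  -- setup
  set P : Matrix (Fin n) (Fin n) ℝ := B * R⁻¹ * Bᵀ with hPdef
  set N : Matrix (Fin n ⊕ Fin n) (Fin n ⊕ Fin n) ℝ :=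
    Matrix.fromBlocks (-Q) (-Aᵀ) A (-P) with hNdef
  set K' : Matrix (Fin n ⊕ Fin n) (Fin n ⊕ Fin n) ℝ :=
    Matrix.fromBlocks Ky⁻¹ 0 0 Klam⁻¹ with hK'def
  have hKydet : IsUnit Ky.det := hKy.det_pos.ne'.isUnit
  have hKldet : IsUnit Klam.det := hKlam.det_pos.ne'.isUnit
  have hKS : K' * S = N := by
    rw [hS, hK'def, hNdef, Matrix.fromBlocks_multiply]
    simp [Matrix.mul_neg, ← Matrix.mul_assoc, Matrix.nonsing_inv_mul _ hKydet,
      Matrix.nonsing_inv_mul _ hKldet]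
  have hmul : (K'.map Complex.ofReal) * (S.map Complex.ofReal) = N.map Complex.ofReal := by
    rw [← map_mul_ofReal, hKS]
  have hNv : N.map Complex.ofReal *ᵥ v = z • (K'.map Complex.ofReal *ᵥ v) := by
    rw [← hmul, ← Matrix.mulVec_mulVec, hvz, Matrix.mulVec_smul]
  have hkey : star v ⬝ᵥ (N.map Complex.ofReal *ᵥ v)
      = z * (star v ⬝ᵥ (K'.map Complex.ofReal *ᵥ v)) := by
    rw [hNv, dotProduct_smul, smul_eq_mul]
  set v₁ : Fin n → ℂ := v ∘ Sum.inl with hv₁def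
  set v₂ : Fin n → ℂ := v ∘ Sum.inr with hv₂def
  have hvel : v = Sum.elim v₁ v₂ := (Sum.elim_comp_inl_inr v).symm
  -- the K' quadratic form
  have hK'pd : K'.PosDef := by
    rw [hK'def]; exact posDef_fromBlocks hKy.inv hKlam.inv
  have hK'sym : K'ᵀ = K' := real_herm_transpose hK'pd.1
  have hα : star v ⬝ᵥ (K'.map Complex.ofReal *ᵥ v)
      = (((fun i => (v i).re) ⬝ᵥ K' *ᵥ (fun j => (v j).re)
          + (fun i => (v i).im) ⬝ᵥ K' *ᵥ (fun j => (v j).im) : ℝ) : ℂ) :=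
    quad_decomp K' hK'sym v
  have hαpos : 0 < (fun i => (v i).re) ⬝ᵥ K' *ᵥ (fun j => (v j).re)
      + (fun i => (v i).im) ⬝ᵥ K' *ᵥ (fun j => (v j).im) := by
    have hab : (fun i => (v i).re) ≠ (0 : (Fin n ⊕ Fin n) → ℝ)
        ∨ (fun i => (v i).im) ≠ (0 : (Fin n ⊕ Fin n) → ℝ) := by
      by_contra hc
      push_neg at hc
      apply hv0
      funext i
      exact Complex.ext (by simpa using congrFun hc.1 i) (by simpa using congrFun hc.2 i)
    rcases hab with h | h
    · exact add_pos_of_pos_of_nonneg (real_pd_quad_pos hK'pd h)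
        (real_psd_quad_nonneg hK'pd.posSemidef _)
    · exact add_pos_of_nonneg_of_pos (real_psd_quad_nonneg hK'pd.posSemidef _)
        (real_pd_quad_pos hK'pd h)
  -- split N quadratic form into blocks
  have hNc : N.map Complex.ofReal
      = Matrix.fromBlocks (-(Q.map Complex.ofReal)) (-(Aᵀ.map Complex.ofReal))
          (A.map Complex.ofReal) (-(P.map Complex.ofReal)) := by
    rw [hNdef, Matrix.fromBlocks_map, map_neg_ofReal, map_neg_ofReal, map_neg_ofReal]
  have hsplit : star v ⬝ᵥ (N.map Complex.ofReal *ᵥ v)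
      = -(star v₁ ⬝ᵥ (Q.map Complex.ofReal *ᵥ v₁))
        - star v₁ ⬝ᵥ (Aᵀ.map Complex.ofReal *ᵥ v₂)
        + star v₂ ⬝ᵥ (A.map Complex.ofReal *ᵥ v₁)
        - star v₂ ⬝ᵥ (P.map Complex.ofReal *ᵥ v₂) := by
    conv_lhs => rw [hNc, hvel]
    rw [Matrix.fromBlocks_mulVec, Function.star_sumElim, sumElim_dotProduct_sumElim]
    simp only [Matrix.neg_mulVec, dotProduct_add, dotProduct_neg,
      Sum.elim_comp_inl, Sum.elim_comp_inr]
    ring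
  have hQsym : Qᵀ = Q := real_herm_transpose hQ.1
  have hPpsd : P.PosSemidef := by
    have h := hR.inv.posSemidef.conjTranspose_mul_mul_same Bᵀ
    have hBt : (Bᵀ)ᴴ = B := by ext i j; rfl
    rwa [hBt] at h
  have hPsym : Pᵀ = P := real_herm_transpose hPpsd.1
  rw [hsplit, hα, quad_decomp Q hQsym v₁, quad_decomp P hPsym v₂,
    bilin_decomp Aᵀ v₁ v₂, bilin_decomp A v₂ v₁] at hkey
  have hre := congrArg Complex.re hkey
  simp only [Complex.add_re, Complex.sub_re, Complex.neg_re, Complex.ofReal_re,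
    Complex.mul_re, Complex.I_re, Complex.ofReal_im, Complex.I_im, Complex.mul_im,
    zero_mul, mul_zero, sub_zero, zero_sub, zero_add, add_zero] at hre
  -- cancel the skew cross terms
  have hc1 : (fun i => (v₁ i).re) ⬝ᵥ Aᵀ *ᵥ (fun j => (v₂ j).re)
      = (fun j => (v₂ j).re) ⬝ᵥ A *ᵥ (fun i => (v₁ i).re) := by
    rw [dot_transpose, Matrix.transpose_transpose]
  have hc2 : (fun i => (v₁ i).im) ⬝ᵥ Aᵀ *ᵥ (fun j => (v₂ j).im)
      = (fun j => (v₂ j).im) ⬝ᵥ A *ᵥ (fun i => (v₁ i).im) := by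
    rw [dot_transpose, Matrix.transpose_transpose]
  rw [hc1, hc2] at hre
  -- nonnegativity of all quadratic pieces
  have hq1 : 0 ≤ (fun i => (v₁ i).re) ⬝ᵥ Q *ᵥ (fun i => (v₁ i).re) :=
    real_psd_quad_nonneg hQ.posSemidef _
  have hq2 : 0 ≤ (fun i => (v₁ i).im) ⬝ᵥ Q *ᵥ (fun i => (v₁ i).im) :=
    real_psd_quad_nonneg hQ.posSemidef _
  have hq3 : 0 ≤ (fun j => (v₂ j).re) ⬝ᵥ P *ᵥ (fun j => (v₂ j).re) :=
    real_psd_quad_nonneg hPpsd _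
  have hq4 : 0 ≤ (fun j => (v₂ j).im) ⬝ᵥ P *ᵥ (fun j => (v₂ j).im) :=
    real_psd_quad_nonneg hPpsd _
  by_contra hzre
  push_neg at hzre
  have hz0 : 0 ≤ z.re * (((fun i => (v i).re) ⬝ᵥ K' *ᵥ fun i => (v i).re)
      + (fun i => (v i).im) ⬝ᵥ K' *ᵥ fun i => (v i).im) :=
    mul_nonneg hzre hαpos.le
  -- each quadratic piece vanishes
  have ha1 : (fun i => (v₁ i).re) = 0 := real_pd_quad_eq_zero hQ (by linarith)
  have hb1 : (fun i => (v₁ i).im) = 0 := real_pd_quad_eq_zero hQ (by linarith)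
  have hv₁0 : v₁ = 0 := by
    funext i
    exact Complex.ext (by simpa using congrFun ha1 i) (by simpa using congrFun hb1 i)
  have hPquad : ∀ w : Fin n → ℝ, w ⬝ᵥ P *ᵥ w = (Bᵀ *ᵥ w) ⬝ᵥ R⁻¹ *ᵥ (Bᵀ *ᵥ w) := by
    intro w
    rw [hPdef, ← Matrix.mulVec_mulVec, ← Matrix.mulVec_mulVec, dotProduct_mulVec,
      ← Matrix.mulVec_transpose]
  have hBa : Bᵀ *ᵥ (fun j => (v₂ j).re) = 0 := by
    refine real_pd_quad_eq_zero hR.inv ?_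
    rw [← hPquad]
    linarith
  have hBb : Bᵀ *ᵥ (fun j => (v₂ j).im) = 0 := by
    refine real_pd_quad_eq_zero hR.inv ?_
    rw [← hPquad]
    linarith
  -- first block equation gives Aᵀ v₂ = 0
  have hK'c : K'.map Complex.ofReal
      = Matrix.fromBlocks (Ky⁻¹.map Complex.ofReal) 0 0 (Klam⁻¹.map Complex.ofReal) := by
    rw [hK'def, Matrix.fromBlocks_map]
    congr 1 <;> ext i j <;> simp [Matrix.map_apply]
  have hNv2 := hNv
  rw [hNc, hK'c, hvel, Matrix.fromBlocks_mulVec, Matrix.fromBlocks_mulVec] at hNv2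
  have hATv : Aᵀ.map Complex.ofReal *ᵥ v₂ = 0 := by
    funext i
    have h := congrFun hNv2 (Sum.inl i)
    simp [hv₁0, Matrix.neg_mulVec, neg_eq_zero] at h
    simpa using h
  obtain ⟨hAa, hAb⟩ := mapVec_zero Aᵀ v₂ hATv
  have ha2 : (fun j => (v₂ j).re) = 0 := by
    refine rank_inj _ hrank ?_
    rw [Matrix.fromRows_mulVec, hAa, hBa]
    funext i
    cases i <;> simp
  have hb2 : (fun j => (v₂ j).im) = 0 := by
    refine rank_inj _ hrank ?_
    rw [Matrix.fromRows_mulVec, hAb, hBb]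
    funext i
    cases i <;> simp
  have hv₂0 : v₂ = 0 := by
    funext i
    exact Complex.ext (by simpa using congrFun ha2 i) (by simpa using congrFun hb2 i)
  apply hv0
  rw [hvel, hv₁0, hv₂0]
  funext i
  cases i <;> simp
end
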